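/- For a complete r-partite graph G = K_{n_1,…,n_r} (r ≥ 2) of order at least k, with k ≥ k' ≥ 2, the Steiner (k,k')-radius satisfies Sr_{k,k'}(G) = k − 1. -/

import Mathlib

open SimpleGraph

/-- The Steiner distance of a vertex set `S` in `G`: the minimum number of edges of a
connected subgraph of `G` whose vertex set contains `S`. -/
noncomputable def steinerDist {V : Type*} (G : SimpleGraph V) (S : Finset V) : ℕ :=
  sInf {n | ∃ H : G.Subgraph, H.Connected ∧ ↑S ⊆ H.verts ∧ H.edgeSet.ncard = n}

lemma exists_parent {W : Type*} (G : SimpleGraph W) (hG : G.Connected) (v0 : W) (u : W)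
    (hu : u ≠ v0) : ∃ w, G.Adj u w ∧ G.dist w v0 + 1 = G.dist u v0 := by
  have hr : G.Reachable u v0 := hG u v0
  have hd : 0 < G.dist u v0 := hr.pos_dist_of_ne hu
  obtain ⟨p, hp⟩ := hr.exists_walk_length_eq_dist
  cases p with
  | nil => exact absurd rfl hu
  | @cons _ w _ h q =>
    refine ⟨w, h, ?_⟩
    have h1 : G.dist w v0 ≤ q.length := G.dist_le q
    have h2 : G.dist u v0 ≤ G.dist u w + G.dist w v0 := hG.dist_triangle
    have h3 : G.dist u w ≤ 1 := by
      simpa using G.dist_le (h.toWalk)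
    simp [Walk.length_cons] at hp
    omega

lemma card_le_ncard_edgeSet {W : Type*} [Fintype W] (G : SimpleGraph W) (hG : G.Connected) :
    Fintype.card W ≤ G.edgeSet.ncard + 1 := by
  classical
  obtain ⟨v0⟩ := hG.nonempty
  choose f hf1 hf2 using exists_parent G hG v0
  have hmaps : Set.MapsTo (fun u => if h : u ≠ v0 then s(u, f u h) else s(u,u))
      ({v0}ᶜ : Set W) G.edgeSet := by
    intro u hu
    simp only [Set.mem_compl_iff, Set.mem_singleton_iff] at hu
    simp only [dif_pos hu]
    exact (hf1 u hu)
  have hinj : Set.InjOn (fun u => if h : u ≠ v0 then s(u, f u h) else s(u,u))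
      ({v0}ᶜ : Set W) := by
    intro u hu u' hu' heq
    simp only [Set.mem_compl_iff, Set.mem_singleton_iff] at hu hu'
    simp only [dif_pos hu, dif_pos hu', Sym2.eq_iff] at heq
    rcases heq with ⟨rfl, -⟩ | ⟨h1, h2⟩
    · rfl
    · exfalso
      have d1 := hf2 u hu
      have d2 := hf2 u' hu'
      rw [← h1, ← h2] at d2
      omega
  have := Set.ncard_le_ncard_of_injOn _ hmaps hinj (G.edgeSet.toFinite)
  have hc : ({v0}ᶜ : Set W).ncard = Fintype.card W - 1 := by
    rw [Set.ncard_eq_toFinset_card']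
    simp [Finset.card_compl]
  have hp : 1 ≤ Fintype.card W := Fintype.card_pos_iff.mpr ⟨v0⟩
  omega

lemma steiner_lower_aux {V : Type*} [Fintype V] (G : SimpleGraph V) (S : Finset V)
    (H : G.Subgraph) (hH : H.Connected) (hS : ↑S ⊆ H.verts) :
    S.card ≤ H.edgeSet.ncard + 1 := by
  classical
  have h1 : S.card ≤ H.verts.ncard := by
    rw [← Set.ncard_coe_finset]
    exact Set.ncard_le_ncard hS (Set.toFinite _)
  have : Fintype H.verts := Fintype.ofFinite _
  have h2 : H.verts.ncard = Fintype.card H.verts := by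
    rw [← Nat.card_coe_set_eq, Nat.card_eq_fintype_card]
  have h3 := card_le_ncard_edgeSet H.coe hH.coe
  have h4 : H.coe.edgeSet.ncard = H.edgeSet.ncard := by
    rw [← H.image_coe_edgeSet_coe]
    exact (Set.ncard_image_of_injective _ (Sym2.map.injective Subtype.val_injective)).symm
  omega

lemma steiner_upper {ι : Type*} {β : ι → Type*} [DecidableEq ι] [DecidableEq (Σ i, β i)]
    (S : Finset (Σ i, β i)) (a b : Σ i, β i) (ha : a ∈ S) (hb : b ∈ S) (hab : b.1 ≠ a.1) :
    steinerDist (completeMultipartiteGraph β) S ≤ S.card - 1 := by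
  classical
  set G := completeMultipartiteGraph β
  have hadj : ∀ x y : Σ i, β i, x.1 ≠ y.1 → G.Adj x y := fun x y h => h
  set H : G.Subgraph :=
    { verts := ↑S
      Adj := fun x y => (x = a ∧ y ∈ S ∧ y.1 ≠ a.1) ∨ (y = a ∧ x ∈ S ∧ x.1 ≠ a.1) ∨
             (x = b ∧ y ∈ S ∧ y.1 = a.1 ∧ y ≠ a) ∨ (y = b ∧ x ∈ S ∧ x.1 = a.1 ∧ x ≠ a)
      adj_sub := by
        rintro x y (⟨rfl, -, h⟩ | ⟨rfl, -, h⟩ | ⟨rfl, -, h, -⟩ | ⟨rfl, -, h, -⟩)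
        · exact hadj _ _ (Ne.symm h)
        · exact hadj _ _ h
        · exact hadj _ _ (fun hh => hab (hh.trans h))
        · exact hadj _ _ (fun hh => hab (hh.symm.trans h))
      edge_vert := by
        rintro x y (⟨rfl, -⟩ | ⟨-, h, -⟩ | ⟨rfl, -⟩ | ⟨-, h, -⟩) <;>
          simpa using ‹_›
      symm := by
        constructor
        rintro x y h
        tauto } with hHdef
  have hab' : b ≠ a := fun h => hab (by rw [h])
  have hAdj_ay : ∀ y, y ∈ S → y.1 ≠ a.1 → H.Adj a y := fun y h1 h2 => Or.inl ⟨rfl, h1, h2⟩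
  have hAdj_by : ∀ y, y ∈ S → y.1 = a.1 → y ≠ a → H.Adj b y :=
    fun y h1 h2 h3 => Or.inr (Or.inr (Or.inl ⟨rfl, h1, h2, h3⟩))
  have haH : a ∈ H.verts := by exact ha
  have hbH : b ∈ H.verts := by exact hb
  have hconn : H.Connected := by
    rw [Subgraph.connected_iff]
    refine ⟨⟨?_⟩, ⟨a, haH⟩⟩
    have key : ∀ y : H.verts, H.coe.Reachable y ⟨a, haH⟩ := by
      rintro ⟨y, hy⟩
      have hyS : y ∈ S := by exact hy
      by_cases h1 : y = a
      · subst h1; rfl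
      by_cases h2 : y.1 = a.1
      · have r1 : H.coe.Adj ⟨y, hy⟩ ⟨b, hbH⟩ := by
          rw [Subgraph.coe_adj]
          exact H.adj_symm (hAdj_by y hyS h2 h1)
        have r2 : H.coe.Adj ⟨b, hbH⟩ ⟨a, haH⟩ := by
          rw [Subgraph.coe_adj]
          exact H.adj_symm (hAdj_ay b hb hab)
        exact (r1.reachable).trans r2.reachable
      · exact (Subgraph.coe_adj H _ _ |>.mpr (H.adj_symm (hAdj_ay y hyS h2))).reachable
    intro u v
    exact (key u).trans (key v).symm
  have hsub : ↑S ⊆ H.verts := subset_rfl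
  have hedge : H.edgeSet.ncard = S.card - 1 := by
    have himg : H.edgeSet =
        ↑((S.erase a).image fun v => if v.1 = a.1 then s(b, v) else s(a, v)) := by
      ext e
      induction e with
      | _ x y =>
        simp only [Subgraph.mem_edgeSet, Finset.coe_image, Set.mem_image, Finset.mem_coe,
          Finset.mem_erase]
        constructor
        · rintro (⟨rfl, h1, h2⟩ | ⟨rfl, h1, h2⟩ | ⟨rfl, h1, h2, h3⟩ | ⟨rfl, h1, h2, h3⟩)
          · exact ⟨y, ⟨fun h => h2 (by rw [h]), h1⟩, by rw [if_neg h2]⟩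
          · exact ⟨x, ⟨fun h => h2 (by rw [h]), h1⟩, by rw [if_neg h2, Sym2.eq_swap]⟩
          · exact ⟨y, ⟨h3, h1⟩, by rw [if_pos h2]⟩
          · exact ⟨x, ⟨h3, h1⟩, by rw [if_pos h2, Sym2.eq_swap]⟩
        · rintro ⟨v, ⟨hv1, hv2⟩, hv3⟩
          by_cases hc : v.1 = a.1
          · rw [if_pos hc] at hv3
            rw [Sym2.eq_iff] at hv3
            rcases hv3 with ⟨rfl, rfl⟩ | ⟨rfl, rfl⟩
            · exact Or.inr (Or.inr (Or.inl ⟨rfl, hv2, hc, hv1⟩))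
            · exact Or.inr (Or.inr (Or.inr ⟨rfl, hv2, hc, hv1⟩))
          · rw [if_neg hc] at hv3
            rw [Sym2.eq_iff] at hv3
            rcases hv3 with ⟨rfl, rfl⟩ | ⟨rfl, rfl⟩
            · exact Or.inl ⟨rfl, hv2, hc⟩
            · exact Or.inr (Or.inl ⟨rfl, hv2, hc⟩)
    rw [himg, Set.ncard_coe_finset, Finset.card_image_of_injOn, Finset.card_erase_of_mem ha]
    intro v hv v' hv' heq
    simp only [Finset.mem_coe, Finset.mem_erase] at hv hv'
    dsimp only at heq
    by_cases h1 : v.1 = a.1 <;> by_cases h2 : v'.1 = a.1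
    · rw [if_pos h1, if_pos h2, Sym2.eq_iff] at heq
      rcases heq with ⟨-, h⟩ | ⟨-, h⟩
      · exact h
      · exact absurd (h ▸ h1) hab
    · rw [if_pos h1, if_neg h2, Sym2.eq_iff] at heq
      rcases heq with ⟨h, -⟩ | ⟨-, h⟩
      · exact absurd (congrArg Sigma.fst h) hab
      · exact absurd h hv.1
    · rw [if_neg h1, if_pos h2, Sym2.eq_iff] at heq
      rcases heq with ⟨h, -⟩ | ⟨h, -⟩
      · exact absurd (congrArg Sigma.fst h).symm hab
      · exact absurd h.symm hv'.1
    · rw [if_neg h1, if_neg h2, Sym2.eq_iff] at heq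
      rcases heq with ⟨-, h⟩ | ⟨-, h⟩
      · exact h
      · exact absurd h hv.1
  exact Nat.sInf_le ⟨H, hconn, hsub, hedge⟩

/-- The Steiner `k`-diameter of `G`: the maximum Steiner distance over `k`-subsets. -/
noncomputable def steinerDiam {V : Type*} [Fintype V] [DecidableEq V]
    (G : SimpleGraph V) (k : ℕ) : ℕ :=
  Finset.sup (Finset.univ.filter fun S : Finset V => S.card = k) (steinerDist G)

/-- The Steiner `(k,k')`-eccentricity of a `k'`-subset `S'`. -/
noncomputable def steinerEcc {V : Type*} [Fintype V] [DecidableEq V]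
    (G : SimpleGraph V) (k : ℕ) (S' : Finset V) : ℕ :=
  Finset.sup (Finset.univ.filter fun S : Finset V => S.card = k ∧ S' ⊆ S) (steinerDist G)

/-- The Steiner `(k,k')`-radius of `G`. -/
noncomputable def steinerRadius {V : Type*} [Fintype V] [DecidableEq V]
    (G : SimpleGraph V) (k k' : ℕ) : ℕ :=
  sInf {n | ∃ S' : Finset V, S'.card = k' ∧ steinerEcc G k S' = n}

/-- The diameter of `G`: the maximum distance between two vertices. -/
noncomputable def gDiam {V : Type*} [Fintype V] (G : SimpleGraph V) : ℕ :=
  Finset.sup Finset.univ (fun p : V × V => G.dist p.1 p.2)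

/-- The number of pendant vertices (leaves) of `G`. -/
noncomputable def leafCount {V : Type*} [Fintype V] [DecidableEq V]
    (G : SimpleGraph V) [DecidableRel G.Adj] : ℕ :=
  (Finset.univ.filter fun v => G.degree v = 1).card

theorem stmt13 (r k k' : ℕ) (hr : 2 ≤ r) (n : Fin r → ℕ) (hmono : Monotone n)
    (hpos : ∀ i, 0 < n i) (hk' : 2 ≤ k') (hk'k : k' ≤ k) (horder : k ≤ ∑ i, n i) :
    steinerRadius (completeMultipartiteGraph (fun i : Fin r => Fin (n i))) k k' = k - 1 := by
  classical
  set V := (Σ i : Fin r, Fin (n i)) with hV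
  set G := completeMultipartiteGraph (fun i : Fin r => Fin (n i)) with hG
  have hcardV : Fintype.card V = ∑ i, n i := by
    simp [hV, Fintype.card_sigma]
  -- two vertices in distinct parts
  have h0r : (0 : ℕ) < r := by omega
  have h1r : (1 : ℕ) < r := by omega
  set i0 : Fin r := ⟨0, h0r⟩ with hi0
  set i1 : Fin r := ⟨1, h1r⟩ with hi1
  set a0 : V := ⟨i0, ⟨0, hpos i0⟩⟩ with ha0
  set b0 : V := ⟨i1, ⟨0, hpos i1⟩⟩ with hb0
  have hb0a0 : b0.1 ≠ a0.1 := by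
    simp only [hb0, ha0]
    intro h
    have := congrArg Fin.val h
    simp [hi0, hi1] at this
  have ha0b0 : a0 ≠ b0 := fun h => hb0a0 (congrArg Sigma.fst h).symm
  -- G is connected
  have hGconn : G.Connected := by
    rw [connected_iff]
    constructor
    · intro v w
      by_cases hvw : v.1 = w.1
      · by_cases hv0 : v.1 = i0
        · have r1 : G.Reachable v b0 := Adj.reachable (by
            show v.1 ≠ b0.1
            rw [hv0, hb0]
            intro h; have := congrArg Fin.val h; simp [hi0, hi1] at this)
          have r2 : G.Reachable b0 w := Adj.reachable (by
            show b0.1 ≠ w.1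
            rw [← hvw, hv0, hb0]
            intro h; have := congrArg Fin.val h; simp [hi0, hi1] at this)
          exact r1.trans r2
        · have r1 : G.Reachable v a0 := Adj.reachable (by
            show v.1 ≠ a0.1; exact fun h => hv0 (h.trans rfl))
          have r2 : G.Reachable a0 w := Adj.reachable (by
            show a0.1 ≠ w.1; rw [← hvw]; exact fun h => hv0 (h.symm.trans rfl))
          exact r1.trans r2
      · exact Adj.reachable hvw
    · exact ⟨a0⟩
  have htop : (⊤ : G.Subgraph).Connected := by
    rw [Subgraph.connected_iff']
    exact (Iso.connected_iff (Subgraph.topIso)).mpr hGconn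
  -- lower bound for steiner distance of any k-set
  have hlow : ∀ S : Finset V, S.card = k → k - 1 ≤ steinerDist G S := by
    intro S hScard
    have hne : {m | ∃ H : G.Subgraph, H.Connected ∧ ↑S ⊆ H.verts ∧ H.edgeSet.ncard = m}.Nonempty := by
      exact ⟨_, ⊤, htop, by rw [Subgraph.verts_top]; exact Set.subset_univ _, rfl⟩
    obtain ⟨H, hc, hs, he⟩ := Nat.sInf_mem hne
    have := steiner_lower_aux G S H hc hs
    unfold steinerDist
    omega
  -- exact value for k-sets containing a0 and b0
  have hexact : ∀ S : Finset V, S.card = k → a0 ∈ S → b0 ∈ S →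
      steinerDist G S = k - 1 := by
    intro S hS hA hB
    refine le_antisymm ?_ (hlow S hS)
    have := steiner_upper S a0 b0 hA hB hb0a0
    rw [hS] at this
    exact this
  have hk2 : 2 ≤ k := le_trans hk' hk'k
  have hkV : k ≤ Fintype.card V := by rw [hcardV]; exact horder
  have hab_card : ({a0, b0} : Finset V).card = 2 := by
    rw [Finset.card_insert_of_notMem (by simp [ha0b0]), Finset.card_singleton]
  -- the central k'-set
  obtain ⟨S0, hS0sub, -, hS0card⟩ :=
    Finset.exists_subsuperset_card_eq (n := k') (Finset.subset_univ ({a0, b0} : Finset V))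
      (by rw [hab_card]; exact hk') (by rw [Finset.card_univ]; exact le_trans hk'k hkV)
  have ha0S0 : a0 ∈ S0 := hS0sub (by simp)
  have hb0S0 : b0 ∈ S0 := hS0sub (by simp)
  have hecc : steinerEcc G k S0 = k - 1 := by
    apply le_antisymm
    · apply Finset.sup_le
      intro S hS
      rw [Finset.mem_filter] at hS
      exact le_of_eq (hexact S hS.2.1 (hS.2.2 ha0S0) (hS.2.2 hb0S0))
    · obtain ⟨S, hSsub, -, hScard⟩ :=
        Finset.exists_subsuperset_card_eq (n := k) (Finset.subset_univ S0)
          (by rw [hS0card]; exact hk'k) (by rw [Finset.card_univ]; exact hkV)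
      have hmem : S ∈ Finset.univ.filter fun T : Finset V => T.card = k ∧ S0 ⊆ T := by
        rw [Finset.mem_filter]
        exact ⟨Finset.mem_univ _, hScard, hSsub⟩
      calc k - 1 = steinerDist G S :=
              (hexact S hScard (hSsub ha0S0) (hSsub hb0S0)).symm
        _ ≤ _ := Finset.le_sup hmem
  have hmemset : (k - 1) ∈ {m | ∃ S' : Finset V, S'.card = k' ∧ steinerEcc G k S' = m} :=
    ⟨S0, hS0card, hecc⟩
  refine le_antisymm (Nat.sInf_le hmemset) (le_csInf ⟨_, hmemset⟩ ?_)
  rintro m ⟨S', hS'card, rfl⟩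
  obtain ⟨S, hSsub, -, hScard⟩ :=
    Finset.exists_subsuperset_card_eq (n := k) (Finset.subset_univ S')
      (by rw [hS'card]; exact hk'k) (by rw [Finset.card_univ]; exact hkV)
  have hmem : S ∈ Finset.univ.filter fun T : Finset V => T.card = k ∧ S' ⊆ T := by
    rw [Finset.mem_filter]
    exact ⟨Finset.mem_univ _, hScard, hSsub⟩
  exact le_trans (hlow S hScard) (Finset.le_sup hmem)
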